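/- The continuous 2-homogeneous polynomial P : ℓ₂ → ℓ₂ defined by P(x) = x₁ · (x₂/2, 2x₃/3, 3x₄/4, ...) satisfies ‖P‖ = 1/2 and does not attain its norm, while the unit-vector sequence ((1/√2)e₁ + (1/√2)eₙ)_{n≥2} is a non-weakly null maximizing sequence for P. Hence the pair (ℓ₂, ℓ₂) fails the 2-homogeneous polynomial weak maximizing property. -/

import Mathlib

open Filter Topology

set_option maxHeartbeats 1000000

private lemma single_coord (i j : ℕ) :
    (lp.single 2 i (1 : ℝ) : ∀ _ : ℕ, ℝ) j = if j = i then 1 else 0 := by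
  by_cases h : j = i
  · subst h; simp [lp.single_apply_self]
  · simp [lp.single_apply_ne 2 i _ h, h]

private lemma lp_hasSum_sq (f : lp (fun _ : ℕ => ℝ) 2) :
    HasSum (fun i => ((f : ∀ _ : ℕ, ℝ) i) ^ 2) (‖f‖ ^ 2) := by
  have h := lp.hasSum_norm (p := 2) (by norm_num) f
  have h2 : (2 : ENNReal).toReal = 2 := by norm_num
  rw [h2] at h
  simpa [Real.rpow_two, Real.norm_eq_abs, sq_abs] using h

private lemma inner_single_single (i j : ℕ) :
    (inner ℝ ((lp.single 2 i (1 : ℝ)) : lp (fun _ : ℕ => ℝ) 2)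
        ((lp.single 2 j (1 : ℝ)) : lp (fun _ : ℕ => ℝ) 2) : ℝ)
      = if i = j then 1 else 0 := by
  rw [lp.inner_single_left]
  rw [single_coord j i]
  by_cases h : i = j <;> simp [h]

theorem vector_valued_2hom_counterexample
    (P : lp (fun _ : ℕ => ℝ) 2 → lp (fun _ : ℕ => ℝ) 2)
    (hP : ∀ x, ∀ k : ℕ, (P x : ∀ _ : ℕ, ℝ) k =
      (x : ∀ _ : ℕ, ℝ) 0 * (((k : ℝ) + 1) / ((k : ℝ) + 2)) * (x : ∀ _ : ℕ, ℝ) (k + 1))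
    (u : ℕ → lp (fun _ : ℕ => ℝ) 2)
    (hu : ∀ n, u n = (1 / Real.sqrt 2) • lp.single 2 0 (1 : ℝ) +
      (1 / Real.sqrt 2) • lp.single 2 (n + 1) (1 : ℝ)) :
    sSup {c : ℝ | ∃ x, ‖x‖ = 1 ∧ c = ‖P x‖} = 1 / 2 ∧
    (¬ ∃ x, ‖x‖ = 1 ∧ ‖P x‖ = 1 / 2) ∧
    (∀ n, ‖u n‖ = 1) ∧
    (¬ ∀ f : lp (fun _ : ℕ => ℝ) 2 →L[ℝ] ℝ, Tendsto (fun n => f (u n)) atTop (𝓝 0)) ∧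
    Tendsto (fun n => ‖P (u n)‖) atTop (𝓝 (1 / 2)) := by
  have sqrt2_pos : (0:ℝ) < Real.sqrt 2 := Real.sqrt_pos.2 (by norm_num)
  set a : ℝ := 1 / Real.sqrt 2 with ha
  have ha2 : a ^ 2 = 1 / 2 := by
    rw [ha, div_pow, one_pow, Real.sq_sqrt (by norm_num : (0:ℝ) ≤ 2)]
  -- coordinates of u n
  have hucoord : ∀ n j, (u n : ∀ _ : ℕ, ℝ) j =
      (if j = 0 then a else 0) + (if j = n + 1 then a else 0) := by
    intro n j
    rw [hu n]
    rw [lp.coeFn_add, Pi.add_apply, lp.coeFn_smul, lp.coeFn_smul, Pi.smul_apply, Pi.smul_apply,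
      single_coord 0 j, single_coord (n+1) j, smul_eq_mul, smul_eq_mul]
    split_ifs <;> ring
  -- strict bound
  have hlt : ∀ x : lp (fun _ : ℕ => ℝ) 2, ‖x‖ = 1 → ‖P x‖ < 1 / 2 := by
    intro x hx
    have hsum1 : HasSum (fun i => ((x : ∀ _ : ℕ, ℝ) i) ^ 2) 1 := by
      have := lp_hasSum_sq x
      rwa [hx, one_pow] at this
    set b : ℝ := (x : ∀ _ : ℕ, ℝ) 0 with hb
    have htail : HasSum (fun k => ((x : ∀ _ : ℕ, ℝ) (k + 1)) ^ 2) (1 - b ^ 2) := by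
      refine (hasSum_nat_add_iff (f := fun i => ((x : ∀ _ : ℕ, ℝ) i) ^ 2) 1).2 ?_
      simpa [hb] using hsum1
    have hPsum : HasSum (fun k => ((P x : ∀ _ : ℕ, ℝ) k) ^ 2) (‖P x‖ ^ 2) := lp_hasSum_sq (P x)
    have hc : ∀ k : ℕ, 0 ≤ ((k : ℝ) + 1) / ((k : ℝ) + 2) ∧ ((k : ℝ) + 1) / ((k : ℝ) + 2) < 1 := by
      intro k
      constructor
      · positivity
      · rw [div_lt_one (by positivity)]; linarith
    have hterm : ∀ k : ℕ, ((P x : ∀ _ : ℕ, ℝ) k) ^ 2 ≤ b ^ 2 * ((x : ∀ _ : ℕ, ℝ) (k + 1)) ^ 2 := by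
      intro k
      rw [hP x k, ← hb]
      obtain ⟨h1, h2⟩ := hc k
      set y : ℝ := (x : ∀ _ : ℕ, ℝ) (k + 1)
      set c : ℝ := ((k : ℝ) + 1) / ((k : ℝ) + 2)
      calc (b * c * y) ^ 2 = c ^ 2 * (b * y) ^ 2 := by ring
        _ ≤ 1 * (b * y) ^ 2 :=
              mul_le_mul_of_nonneg_right (by nlinarith) (sq_nonneg (b * y))
        _ = b ^ 2 * y ^ 2 := by ring
    have hmul : HasSum (fun k => b ^ 2 * ((x : ∀ _ : ℕ, ℝ) (k + 1)) ^ 2) (b ^ 2 * (1 - b ^ 2)) :=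
      htail.mul_left _
    have h1 : ‖P x‖ ^ 2 ≤ b ^ 2 * (1 - b ^ 2) := hasSum_le hterm hPsum hmul
    have h2 : b ^ 2 * (1 - b ^ 2) ≤ 1 / 4 := by nlinarith [sq_nonneg (b ^ 2 - 1 / 2)]
    by_contra hcon
    push_neg at hcon
    have hge : (1 / 4 : ℝ) ≤ ‖P x‖ ^ 2 := by
      nlinarith [mul_le_mul hcon hcon (by norm_num : (0:ℝ) ≤ 1/2) (norm_nonneg (P x))]
    have hb2 : b ^ 2 = 1 / 2 := by nlinarith [sq_nonneg (b ^ 2 - 1 / 2)]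
    have hex : ∃ k : ℕ, (x : ∀ _ : ℕ, ℝ) (k + 1) ≠ 0 := by
      by_contra hall
      push_neg at hall
      have hfeq : (fun k : ℕ => ((x : ∀ _ : ℕ, ℝ) (k + 1)) ^ 2) = fun _ => (0:ℝ) :=
        funext fun k => by rw [hall k]; ring
      rw [hfeq] at htail
      have := hasSum_zero.unique htail
      rw [hb2] at this; norm_num at this
    obtain ⟨k, hk⟩ := hex
    have hstrict : ((P x : ∀ _ : ℕ, ℝ) k) ^ 2 < b ^ 2 * ((x : ∀ _ : ℕ, ℝ) (k + 1)) ^ 2 := by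
      rw [hP x k, ← hb]
      obtain ⟨hc1, hc2⟩ := hc k
      have hksq : 0 < ((x : ∀ _ : ℕ, ℝ) (k + 1)) ^ 2 := by positivity
      have hbsq : 0 < b ^ 2 := by rw [hb2]; norm_num
      have hre : (b * (((k : ℝ) + 1) / ((k : ℝ) + 2)) * (x : ∀ _ : ℕ, ℝ) (k + 1)) ^ 2
          = (((k : ℝ) + 1) / ((k : ℝ) + 2)) ^ 2 * (b ^ 2 * ((x : ∀ _ : ℕ, ℝ) (k + 1)) ^ 2) := by
        ring
      rw [hre]
      have hcc : (((k : ℝ) + 1) / ((k : ℝ) + 2)) ^ 2 < 1 := by nlinarith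
      exact mul_lt_of_lt_one_left (mul_pos hbsq hksq) hcc
    have hlt2 : ‖P x‖ ^ 2 < b ^ 2 * (1 - b ^ 2) := hasSum_lt hterm hstrict hPsum hmul
    nlinarith
  -- norms of u n
  have hun : ∀ n, ‖u n‖ = 1 := by
    intro n
    have hinner : (inner ℝ (u n) (u n) : ℝ) = 1 := by
      rw [hu n]
      have h01 : ¬ ((0 : ℕ) = n + 1) := by omega
      have h10 : ¬ ((n + 1 : ℕ) = 0) := by omega
      simp only [inner_add_add_self, real_inner_smul_left, real_inner_smul_right,
        inner_single_single, if_neg h01, if_neg h10, if_pos rfl, if_true]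
      have hs : ((Real.sqrt 2 : ℝ))⁻¹ ^ 2 = 1 / 2 := by
        rw [inv_pow, Real.sq_sqrt (by norm_num : (0:ℝ) ≤ 2)]; norm_num
      linear_combination 2 * hs
    have h := real_inner_self_eq_norm_sq (u n)
    rw [hinner] at h
    have hnn : 0 ≤ ‖u n‖ := norm_nonneg _
    have h2 : ‖u n‖ = Real.sqrt (‖u n‖ ^ 2) := (Real.sqrt_sq hnn).symm
    rw [h2, ← h, Real.sqrt_one]
  -- value of P on u n
  have hPu : ∀ n : ℕ, P (u n)
      = (((n : ℝ) + 1) / (2 * ((n : ℝ) + 2))) • (lp.single 2 n (1 : ℝ)) := by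
    intro n
    apply lp.ext
    funext k
    rw [lp.coeFn_smul, Pi.smul_apply, single_coord n k, smul_eq_mul]
    rw [hP (u n) k, hucoord n 0, hucoord n (k + 1)]
    have h0 : ¬ ((0 : ℕ) = n + 1) := by omega
    have h1 : ¬ ((k + 1 : ℕ) = 0) := by omega
    rw [if_pos rfl, if_neg h0, if_neg h1]
    by_cases hk : k = n
    · subst hk
      rw [if_pos rfl, if_pos rfl]
      have : (a + 0) * (((k : ℝ) + 1) / ((k : ℝ) + 2)) * (0 + a)
          = a ^ 2 * (((k : ℝ) + 1) / ((k : ℝ) + 2)) := by ring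
      rw [this, ha2]
      field_simp
    · have hk1 : ¬ ((k + 1 : ℕ) = n + 1) := by omega
      rw [if_neg hk1, if_neg hk]
      ring
  have hnormPu : ∀ n : ℕ, ‖P (u n)‖ = ((n : ℝ) + 1) / (2 * ((n : ℝ) + 2)) := by
    intro n
    rw [hPu n, norm_smul]
    have h1 : ‖(lp.single 2 n (1 : ℝ) : lp (fun _ : ℕ => ℝ) 2)‖ = 1 := by
      have := lp.norm_single (p := 2) (E := fun _ : ℕ => ℝ) (by norm_num) n (1 : ℝ)
      simpa using this
    rw [h1, mul_one, Real.norm_eq_abs, abs_of_nonneg (by positivity)]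
  -- tendsto
  have htend : Tendsto (fun n : ℕ => ‖P (u n)‖) atTop (𝓝 (1 / 2)) := by
    have hfa : Tendsto (fun n : ℕ => ((n : ℝ) + 2)) atTop atTop :=
      Filter.tendsto_atTop_add_const_right atTop 2 tendsto_natCast_atTop_atTop
    have h0 : Tendsto (fun n : ℕ => ((n : ℝ) + 2)⁻¹) atTop (𝓝 0) := hfa.inv_tendsto_atTop
    have hkey : Tendsto (fun n : ℕ => 1 / 2 - 1 / 2 * ((n : ℝ) + 2)⁻¹) atTop
        (𝓝 (1 / 2 - 1 / 2 * 0)) := tendsto_const_nhds.sub (tendsto_const_nhds.mul h0)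
    have heq : (fun n : ℕ => ‖P (u n)‖)
        = fun n : ℕ => 1 / 2 - 1 / 2 * ((n : ℝ) + 2)⁻¹ := by
      funext n
      rw [hnormPu n]
      have hne : ((n : ℝ) + 2) ≠ 0 := by positivity
      field_simp
      ring
    rw [heq]
    simpa using hkey
  -- assemble
  refine ⟨?_, ?_, hun, ?_, htend⟩
  · -- sSup
    have hbdd : BddAbove {c : ℝ | ∃ x, ‖x‖ = 1 ∧ c = ‖P x‖} := by
      refine ⟨1 / 2, ?_⟩
      rintro c ⟨x, hx, rfl⟩
      exact (hlt x hx).le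
    apply le_antisymm
    · apply Real.sSup_le
      · rintro c ⟨x, hx, rfl⟩
        exact (hlt x hx).le
      · norm_num
    · refine le_of_tendsto' htend fun n => ?_
      exact le_csSup hbdd ⟨u n, hun n, rfl⟩
  · rintro ⟨x, hx, hPx⟩
    exact absurd hPx (ne_of_lt (hlt x hx))
  · intro hcontra
    have hf := hcontra (innerSL ℝ (lp.single 2 0 (1 : ℝ) : lp (fun _ : ℕ => ℝ) 2))
    have hval : ∀ n : ℕ,
        (innerSL ℝ (lp.single 2 0 (1 : ℝ) : lp (fun _ : ℕ => ℝ) 2)) (u n) = a := by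
      intro n
      have : (inner ℝ (lp.single 2 0 (1 : ℝ) : lp (fun _ : ℕ => ℝ) 2) (u n) : ℝ)
          = (u n : ∀ _ : ℕ, ℝ) 0 := by
        rw [lp.inner_single_left]
        simp [RCLike.inner_apply]
      rw [innerSL_apply_apply, this, hucoord n 0]
      have h0 : ¬ ((0 : ℕ) = n + 1) := by omega
      rw [if_pos rfl, if_neg h0, add_zero]
    have heq2 : (fun n : ℕ =>
        (innerSL ℝ (lp.single 2 0 (1 : ℝ) : lp (fun _ : ℕ => ℝ) 2)) (u n)) = fun _ => a :=
      funext hval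
    rw [heq2] at hf
    have : a = 0 := tendsto_nhds_unique tendsto_const_nhds hf
    rw [ha] at this
    have hpos : (0:ℝ) < 1 / Real.sqrt 2 := by positivity
    rw [this] at hpos
    exact lt_irrefl 0 hpos
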